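/- The map θ from D1(ξ,ℓ) to D2(ξ) is surjective: for every (x⁰,x¹) ∈ D2(ξ) there exists (x,l) ∈ D1(ξ,ℓ) with θ(x,l) = (x⁰,x¹); in fact one may take xᵢ = x⁰ᵢ + x¹ᵢ and lᵢ = (x⁰ᵢ + ℓᵢ·x¹ᵢ)/(x⁰ᵢ + x¹ᵢ) whenever x⁰ᵢ + x¹ᵢ > 0, and xᵢ = 0, lᵢ = 1 otherwise. -/
import Mathlib


/-- θ : D1(ξ,ℓ) → D2(ξ) is surjective, with explicit preimage
xᵢ = x⁰ᵢ + x¹ᵢ and lᵢ = (x⁰ᵢ + ℓᵢ·x¹ᵢ)/(x⁰ᵢ + x¹ᵢ) (when x⁰ᵢ + x¹ᵢ > 0, and lᵢ = 1 otherwise). -/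
theorem theta_surjective_onto_D2
    (n : ℕ) (hn : 1 ≤ n) (ξ : ℝ) (hξ : 0 < ξ)
    (L : Fin n → ℝ) (hL : ∀ i, 1 < L i)
    (x0 x1 : Fin n → ℝ)
    (h0 : ∀ i, 0 ≤ x0 i) (h1 : ∀ i, 0 ≤ x1 i)
    (hsum : (∑ i, x0 i) + (∑ i, x1 i) = ξ) :
    let x : Fin n → ℝ := fun i => x0 i + x1 i
    let l : Fin n → ℝ := fun i =>
      if 0 < x0 i + x1 i then (x0 i + L i * x1 i) / (x0 i + x1 i) else 1
    -- (x, l) ∈ D1(ξ,ℓ):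
    ((∀ i, 0 ≤ x i) ∧ (∑ i, x i = ξ) ∧ (∀ i, 1 ≤ l i) ∧ (∀ i, l i ≤ L i)) ∧
    -- and θ(x,l) = (x⁰, x¹):
    (∀ i, x i * (L i - l i) / (L i - 1) = x0 i) ∧
    (∀ i, x i * (l i - 1) / (L i - 1) = x1 i) := by
  intro x l
  have hLne : ∀ i, L i - 1 ≠ 0 := fun i => sub_ne_zero.mpr (ne_of_gt (hL i))
  refine ⟨⟨fun i => add_nonneg (h0 i) (h1 i), by
      simpa [x, Finset.sum_add_distrib] using hsum, ?_, ?_⟩, ?_, ?_⟩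
  · intro i
    simp only [l]
    split_ifs with h
    · rw [le_div_iff₀ h]
      nlinarith [h1 i, hL i]
    · exact le_refl 1
  · intro i
    simp only [l]
    split_ifs with h
    · rw [div_le_iff₀ h]
      nlinarith [h0 i, hL i]
    · exact le_of_lt (hL i)
  · intro i
    simp only [x, l]
    split_ifs with h
    · field_simp [hLne i, ne_of_gt h]
      ring
    · have h0' : x0 i = 0 := by nlinarith [h0 i, h1 i, not_lt.mp h]
      have h1' : x1 i = 0 := by nlinarith [h0 i, h1 i, not_lt.mp h]
      simp [h0', h1']
  · intro i
    simp only [x, l]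
    split_ifs with h
    · field_simp [hLne i, ne_of_gt h]
      ring
    · have h1' : x1 i = 0 := by nlinarith [h0 i, h1 i, not_lt.mp h]
      simp [h1']
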